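/- Let α, β be nonzero algebraic integers contained in some cyclotomic field, both of which are d-numbers (i.e. σ(α)/α and σ(β)/β are algebraic integers for every automorphism σ of the algebraic closure of ℚ), and let L = ℚ(α, β). Then β divides α in the ring of algebraic integers if and only if the integer N_L(β) divides N_L(α), where N_L denotes the field norm from L to ℚ. -/

import Mathlib

set_option maxHeartbeats 1000000
set_option synthInstance.maxHeartbeats 400000

open IntermediateField

local notation "Qb" => algebraicClosure ℚ ℂ

private lemma extend_algEquiv (φ : Qb ≃ₐ[ℚ] Qb) :
    ∃ g : ℂ ≃+* ℂ, ∀ x : Qb, g x = φ x := by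
  obtain ⟨s, hs⟩ := exists_isTranscendenceBasis (↥Qb) ℂ
  haveI := IsAlgClosed.isAlgClosure_of_transcendence_basis _ hs
  set T := Algebra.adjoin (↥Qb) (Set.range ((↑) : s → ℂ)) with hT
  let e₁ : MvPolynomial s (↥Qb) ≃ₐ[↥Qb] T := hs.1.aevalEquiv
  let eT : ↥T ≃+* ↥T :=
    (e₁.symm.toRingEquiv.trans (MvPolynomial.mapEquiv s (φ.toRingEquiv))).trans e₁.toRingEquiv
  refine ⟨IsAlgClosure.equivOfEquiv ℂ ℂ eT, fun x => ?_⟩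
  have h0 : (x : ℂ) = algebraMap T ℂ (algebraMap (↥Qb) T x) := by
    rw [← IsScalarTower.algebraMap_apply]
    rfl
  have h2 : e₁.symm (algebraMap (↥Qb) T x) = MvPolynomial.C x := by
    rw [show (MvPolynomial.C x : MvPolynomial s (↥Qb)) = algebraMap (↥Qb) _ x from rfl]
    exact e₁.symm.commutes x
  have h1 : eT (algebraMap (↥Qb) T x) = algebraMap (↥Qb) T (φ x) := by
    show e₁ (MvPolynomial.mapEquiv s (φ.toRingEquiv) (e₁.symm (algebraMap (↥Qb) T x)))
        = algebraMap (↥Qb) T (φ x)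
    rw [h2]
    rw [show MvPolynomial.mapEquiv s (φ.toRingEquiv) (MvPolynomial.C x)
        = MvPolynomial.C (φ x) from MvPolynomial.map_C _ x]
    rw [show (MvPolynomial.C (φ x) : MvPolynomial s (↥Qb)) = algebraMap (↥Qb) _ (φ x) from rfl]
    exact e₁.commutes (φ x)
  rw [h0, IsAlgClosure.equivOfEquiv_algebraMap, h1, ← IsScalarTower.algebraMap_apply]
  rfl

private lemma extend_algHom (L : IntermediateField ℚ ℂ) [Algebra.IsAlgebraic ℚ L]
    (σ : L →ₐ[ℚ] ℂ) : ∃ g : ℂ ≃+* ℂ, ∀ x : L, g x = σ x := by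
  haveI : Algebra.IsAlgebraic ℚ Qb := by
    convert algebraicClosure.isAlgebraic ℚ ℂ
    · rfl
    · exact Subsingleton.elim _ _
  have hL : L ≤ Qb := (le_algebraicClosure_iff ℚ ℂ L).mpr (by
    convert ‹Algebra.IsAlgebraic ℚ L›
    · rfl
    · exact Subsingleton.elim _ _)
  letI : Algebra L Qb := (inclusion hL).toAlgebra
  haveI : IsScalarTower ℚ L Qb := IsScalarTower.of_algebraMap_eq fun q =>
    Subtype.ext (by simp [RingHom.algebraMap_toAlgebra])
  haveI : Algebra.IsAlgebraic (↥L) (↥Qb) := Algebra.IsAlgebraic.tower_top (K := ℚ) (↥L)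
  obtain ⟨ψ', hψ'⟩ := IsAlgClosed.surjective_restrictDomain_of_isAlgebraic
    (K := ℚ) (L := ↥L) (E := ↥Qb) (M := ℂ) σ
  have hψ : ∀ x : L, ψ' (algebraMap L Qb x) = σ x := fun x => DFunLike.congr_fun hψ' x
  have hmem : ∀ y : Qb, ψ' y ∈ Qb := by
    intro y
    have hy : IsIntegral ℚ y :=
      (isIntegral_algebraMap_iff (algebraMap (↥Qb) ℂ).injective).mp y.2
    exact (hy.map ψ' : IsIntegral ℚ (ψ' y))
  let φ₀ : Qb →ₐ[ℚ] Qb :=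
    { toFun := fun y => ⟨ψ' y, hmem y⟩
      map_one' := by ext; simp
      map_mul' := fun a b => by ext; simp
      map_zero' := by ext; simp
      map_add' := fun a b => by ext; simp
      commutes' := fun q => by ext; simpa using ψ'.commutes q }
  have hbij := Algebra.IsAlgebraic.algHom_bijective φ₀
  obtain ⟨g, hg⟩ := extend_algEquiv (AlgEquiv.ofBijective φ₀ hbij)
  refine ⟨g, fun x => ?_⟩
  have hx : (x : ℂ) = ((algebraMap L Qb x : Qb) : ℂ) := rfl
  calc g x = ((AlgEquiv.ofBijective φ₀ hbij) (algebraMap L Qb x) : ℂ) := by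
        rw [hx]; exact hg _
    _ = ψ' (algebraMap L Qb x) := rfl
    _ = σ x := hψ x


/-- For nonzero cyclotomic d-numbers `α, β` with `L = ℚ(α,β)`, `β` divides `α` in
the ring of algebraic integers iff `N_L(β)` divides `N_L(α)` in `ℤ`. -/
theorem stmt18 (α β : ℂ) (hα0 : α ≠ 0) (hβ0 : β ≠ 0)
    (hαint : IsIntegral ℤ α) (hβint : IsIntegral ℤ β)
    (n : ℕ) (hn : 1 ≤ n) (ζ : ℂ) (hζ : IsPrimitiveRoot ζ n)
    (hαmem : α ∈ ℚ⟮ζ⟯) (hβmem : β ∈ ℚ⟮ζ⟯)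
    (hαd : ∀ σ : ℂ ≃+* ℂ, IsIntegral ℤ (σ α / α))
    (hβd : ∀ σ : ℂ ≃+* ℂ, IsIntegral ℤ (σ β / β))
    (Nα Nβ : ℤ)
    (hNα : (Nα : ℚ) = Algebra.norm ℚ
      (⟨α, IntermediateField.subset_adjoin ℚ {α, β} (by simp)⟩ :
        IntermediateField.adjoin ℚ {α, β}))
    (hNβ : (Nβ : ℚ) = Algebra.norm ℚ
      (⟨β, IntermediateField.subset_adjoin ℚ {α, β} (by simp)⟩ :
        IntermediateField.adjoin ℚ {α, β})) :
    (∃ γ : ℂ, IsIntegral ℤ γ ∧ α = β * γ) ↔ Nβ ∣ Nα := by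
  set E := IntermediateField.adjoin ℚ ({α, β} : Set ℂ) with hE
  have hαE : α ∈ E := subset_adjoin ℚ {α, β} (by simp)
  have hβE : β ∈ E := subset_adjoin ℚ {α, β} (by simp)
  haveI : Finite ({α, β} : Set ℂ) := Set.Finite.to_subtype
    ((Set.finite_singleton β).insert α)
  haveI : FiniteDimensional ℚ E := finiteDimensional_adjoin (fun x hx => by
    rcases hx with h | h
    · subst h; exact IsIntegral.tower_top (A := ℚ) hαint
    · rcases h with h; subst h; exact IsIntegral.tower_top (A := ℚ) hβint)
  set m := Fintype.card (E →ₐ[ℚ] ℂ) with hmdef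
  have hm : 0 < m := Fintype.card_pos_iff.mpr ⟨E.val⟩
  have key : ∀ (x : ℂ) (hx : x ∈ E), x ≠ 0 →
      (∀ σ : ℂ ≃+* ℂ, IsIntegral ℤ (σ x / x)) →
      ∀ N : ℤ, (N : ℚ) = Algebra.norm ℚ (⟨x, hx⟩ : E) →
      (N : ℂ) ≠ 0 ∧ IsIntegral ℤ ((N : ℂ) / x ^ m) ∧ IsIntegral ℤ (x ^ m / (N : ℂ)) := by
    intro x hx hx0 hd N hN
    have hprod : (N : ℂ) = ∏ σ : E →ₐ[ℚ] ℂ, σ ⟨x, hx⟩ := by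
      have h1 : algebraMap ℚ ℂ ((N : ℚ)) = ∏ σ : E →ₐ[ℚ] ℂ, σ ⟨x, hx⟩ := by
        rw [hN]; exact Algebra.norm_eq_prod_embeddings ℚ ℂ _
      simpa using h1
    have hconj : ∀ σ : E →ₐ[ℚ] ℂ, ∃ g : ℂ ≃+* ℂ, g x = σ ⟨x, hx⟩ := by
      intro σ
      obtain ⟨g, hg⟩ := extend_algHom E σ
      exact ⟨g, hg ⟨x, hx⟩⟩
    have hX0 : (⟨x, hx⟩ : E) ≠ 0 :=
      fun h => hx0 (by simpa using congrArg (fun y : E => (y : ℂ)) h)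
    have hN0 : (N : ℂ) ≠ 0 := by
      rw [hprod]
      exact Finset.prod_ne_zero_iff.mpr fun σ _ h =>
        hX0 (σ.toRingHom.injective (by simpa using h))
    refine ⟨hN0, ?_, ?_⟩
    · have heq : (N : ℂ) / x ^ m = ∏ σ : E →ₐ[ℚ] ℂ, (σ ⟨x, hx⟩ / x) := by
        rw [Finset.prod_div_distrib, ← hprod, Finset.prod_const, Finset.card_univ]
      rw [heq]
      refine IsIntegral.prod _ fun σ _ => ?_
      obtain ⟨g, hg⟩ := hconj σ
      rw [← hg]; exact hd g
    · have heq : x ^ m / (N : ℂ) = ∏ σ : E →ₐ[ℚ] ℂ, (x / σ ⟨x, hx⟩) := by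
        rw [Finset.prod_div_distrib, ← hprod, Finset.prod_const, Finset.card_univ]
      rw [heq]
      refine IsIntegral.prod _ fun σ _ => ?_
      obtain ⟨g, hg⟩ := hconj σ
      have h3 : x / σ ⟨x, hx⟩ = g (g.symm x / x) := by
        rw [map_div₀, g.apply_symm_apply, hg]
      rw [h3]
      exact (hd (g.symm : ℂ ≃+* ℂ)).map g.toRingHom.toIntAlgHom
  constructor
  · rintro ⟨γ, hγint, hγ⟩
    have hγval : γ = α / β := by
      field_simp [hγ]
      rw [hγ]; ring
    have hγE : γ ∈ E := hγval ▸ div_mem hαE hβE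
    have hmul : (⟨α, hαE⟩ : E) = ⟨β, hβE⟩ * ⟨γ, hγE⟩ := Subtype.ext hγ
    have hGint : IsIntegral ℤ ((⟨γ, hγE⟩ : E)) :=
      (isIntegral_algebraMap_iff (algebraMap E ℂ).injective).mp (by simpa using hγint)
    haveI : IsScalarTower ℤ ℚ E := IsScalarTower.of_algebraMap_eq fun n => by
      simp
    have hnorm : IsIntegral ℤ (Algebra.norm ℚ ((⟨γ, hγE⟩ : E))) :=
      Algebra.isIntegral_norm (R := ℤ) (K := ℚ) (L := E) hGint
    obtain ⟨k, hk⟩ := IsIntegrallyClosed.isIntegral_iff.mp hnorm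
    refine ⟨k, ?_⟩
    have hQ : (Nα : ℚ) = (Nβ : ℚ) * (k : ℚ) := by
      calc (Nα : ℚ) = Algebra.norm ℚ (⟨α, hαE⟩ : E) := hNα
        _ = Algebra.norm ℚ ((⟨β, hβE⟩ : E) * ⟨γ, hγE⟩) := by rw [hmul]
        _ = Algebra.norm ℚ (⟨β, hβE⟩ : E) * Algebra.norm ℚ (⟨γ, hγE⟩ : E) := map_mul _ _ _
        _ = (Nβ : ℚ) * (k : ℚ) := by rw [← hNβ, ← hk]; norm_num
    exact_mod_cast hQ
  · rintro ⟨c, hc⟩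
    obtain ⟨hNα0, hα1, hα2⟩ := key α hαE hα0 hαd Nα hNα
    obtain ⟨hNβ0, hβ1, hβ2⟩ := key β hβE hβ0 hβd Nβ hNβ
    have hcc : (Nα : ℂ) = (Nβ : ℂ) * (c : ℂ) := by exact_mod_cast congrArg (Int.cast : ℤ → ℂ) hc
    have heq : (α / β) ^ m = (c : ℂ) * (α ^ m / (Nα : ℂ)) * ((Nβ : ℂ) / β ^ m) := by
      have hβm : β ^ m ≠ 0 := pow_ne_zero _ hβ0
      rw [div_pow]
      field_simp
      rw [hcc]
      ring
    have hpow : IsIntegral ℤ ((α / β) ^ m) := by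
      rw [heq]
      exact ((isIntegral_algebraMap (x := c)).mul hα2).mul hβ1
    refine ⟨α / β, IsIntegral.of_pow hm hpow, ?_⟩
    field_simp
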